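/- Let A, B, C, D be points in ℝ² with dist(A,B) = dist(B,C) = dist(C,D) = 1 and dist(A,D) ≥ 1, and suppose that A and D lie strictly on the same side of the line through B and C. Then ∠ABC + ∠BCD ≥ π; moreover, if ∠ABC + ∠BCD = π then dist(A,D) = 1. -/

import Mathlib

open Real EuclideanGeometry

abbrev Pt := EuclideanSpace ℝ (Fin 2)

private lemma dist_coord (X Y : Pt) :
    dist X Y = Real.sqrt ((X 0 - Y 0)^2 + (X 1 - Y 1)^2) := by
  rw [EuclideanSpace.dist_eq, Fin.sum_univ_two]
  simp [Real.dist_eq, sq_abs]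

private lemma dist_one_coord {X Y : Pt} (h : dist X Y = 1) :
    (X 0 - Y 0)^2 + (X 1 - Y 1)^2 = 1 := by
  have hk := dist_coord X Y
  rw [h] at hk
  exact Real.sqrt_eq_one.mp hk.symm

private lemma angle_coord (X Y Z : Pt) (h1 : dist X Y = 1) (h2 : dist Z Y = 1) :
    EuclideanGeometry.angle X Y Z =
      Real.arccos ((X 0 - Y 0)*(Z 0 - Y 0) + (X 1 - Y 1)*(Z 1 - Y 1)) := by
  rw [EuclideanGeometry.angle, InnerProductGeometry.angle]
  have hn1 : ‖X -ᵥ Y‖ = 1 := by rw [← dist_eq_norm_vsub]; exact h1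
  have hn2 : ‖Z -ᵥ Y‖ = 1 := by rw [← dist_eq_norm_vsub]; exact h2
  rw [hn1, hn2]
  simp [PiLp.inner_apply, Fin.sum_univ_two, RCLike.inner_apply, vsub_eq_sub]
  congr 1; ring

private lemma alg1 (s t p q : ℝ) (hp : p^2 = 1 - s^2) (hq : q^2 = 1 - t^2)
    (hpq : 0 < p*q) (h5 : p*q ≤ (1-s)*(1+t)) : s ≤ t := by
  have hpos : 0 < (1-s)*(1+t) := lt_of_lt_of_le hpq h5
  have hsq := mul_self_le_mul_self hpq.le h5
  nlinarith [hsq, hpos, hp, hq]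

private lemma alg2 (s t p q : ℝ) (hp : p^2 = 1 - s^2) (hq : q^2 = 1 - t^2)
    (hpq : 0 < p*q) (heq : s = t) : p*q = 1 - s^2 := by
  have h1S : 0 < 1 - s^2 := by nlinarith [sq_nonneg (p - q)]
  have h8 : (p*q - (1-s^2))*(p*q + (1-s^2)) = 0 := by
    linear_combination q^2*hp + (1-s^2)*hq + (1-s^2)*(s+t)*heq
  rcases mul_eq_zero.mp h8 with h | h
  · linarith
  · exfalso; nlinarith

private lemma core (ua ub va vb wa wb : ℝ)
    (h1 : ua^2 + ub^2 = 1) (h2 : va^2 + vb^2 = 1) (h3 : wa^2 + wb^2 = 1)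
    (hpq : 0 < (va*ub - vb*ua) * (va*wb - vb*wa)) :
    (1 ≤ (ua - va - wa)^2 + (ub - vb - wb)^2 → ua*va + ub*vb ≤ va*wa + vb*wb) ∧
    (ua*va + ub*vb = va*wa + vb*wb →
      (ua - va - wa)^2 + (ub - vb - wb)^2 = 1) := by
  have hP2 : (va*ub - vb*ua)^2 = 1 - (ua*va + ub*vb)^2 := by
    linear_combination (va^2 + vb^2) * h1 + h2
  have hQ2 : (va*wb - vb*wa)^2 = 1 - (va*wa + vb*wb)^2 := by
    linear_combination (va^2 + vb^2) * h3 + h2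
  have hUW : ua*wa + ub*wb =
      (ua*va + ub*vb)*(va*wa + vb*wb) + (va*ub - vb*ua)*(va*wb - vb*wa) := by
    linear_combination (-(ua*wa + ub*wb)) * h2
  constructor
  · intro h4
    have h5 : (va*ub - vb*ua)*(va*wb - vb*wa) ≤
        (1 - (ua*va + ub*vb))*(1 + (va*wa + vb*wb)) := by
      nlinarith [h4, h1, h2, h3, hUW]
    exact alg1 _ _ _ _ hP2 hQ2 hpq h5
  · intro heq
    have hPQval := alg2 _ _ _ _ hP2 hQ2 hpq heq
    linear_combination h1 + h2 + h3 - 2*hUW - 2*hPQval + (2*(ua*va + ub*vb) - 2)*heq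

set_option maxHeartbeats 1000000 in
theorem angle_sum_ge_pi (A B C D : Pt)
    (hAB : dist A B = 1) (hBC : dist B C = 1) (hCD : dist C D = 1)
    (hAD : 1 ≤ dist A D)
    (hside : (affineSpan ℝ ({B, C} : Set Pt)).SSameSide A D) :
    π ≤ EuclideanGeometry.angle A B C + EuclideanGeometry.angle B C D ∧
      (EuclideanGeometry.angle A B C + EuclideanGeometry.angle B C D = π →
        dist A D = 1) := by
  obtain ⟨⟨p₁, hp₁, p₂, hp₂, hray⟩, hA, hD⟩ := hside
  have h1 : (A 0 - B 0)^2 + (A 1 - B 1)^2 = 1 := dist_one_coord hAB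
  have h2c : (C 0 - B 0)^2 + (C 1 - B 1)^2 = 1 := by
    linear_combination dist_one_coord hBC
  have h3c : (D 0 - C 0)^2 + (D 1 - C 1)^2 = 1 := by
    linear_combination dist_one_coord hCD
  have h4 : 1 ≤ (A 0 - D 0)^2 + (A 1 - D 1)^2 := by
    have hk := dist_coord A D
    rw [hk] at hAD
    have h0 : (0:ℝ) ≤ (A 0 - D 0)^2 + (A 1 - D 1)^2 := by positivity
    nlinarith [Real.sq_sqrt h0, hAD]
  have h4' : 1 ≤ ((A 0 - B 0) - (C 0 - B 0) - (D 0 - C 0))^2 +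
      ((A 1 - B 1) - (C 1 - B 1) - (D 1 - C 1))^2 := by
    have e : ((A 0 - B 0) - (C 0 - B 0) - (D 0 - C 0))^2 +
        ((A 1 - B 1) - (C 1 - B 1) - (D 1 - C 1))^2 =
        (A 0 - D 0)^2 + (A 1 - D 1)^2 := by ring
    rw [e]; exact h4
  -- the line condition implies membership in the affine span
  have hmem : ∀ X : Pt, (C 0 - B 0) * (X 1 - B 1) = (C 1 - B 1) * (X 0 - B 0) →
      X ∈ affineSpan ℝ ({B, C} : Set Pt) := by
    intro X hX
    have hline : ∀ r : ℝ, X 0 - B 0 = r * (C 0 - B 0) → X 1 - B 1 = r * (C 1 - B 1) →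
        X ∈ affineSpan ℝ ({B, C} : Set Pt) := by
      intro r hx0 hx1
      rw [← vsub_vadd X B]
      refine vadd_left_mem_affineSpan_pair.mpr ⟨r, ?_⟩
      refine PiLp.ext (Fin.forall_fin_two.mpr ⟨?_, ?_⟩)
      · simp only [vsub_eq_sub, PiLp.smul_apply, PiLp.sub_apply, smul_eq_mul]
        linarith [hx0]
      · simp only [vsub_eq_sub, PiLp.smul_apply, PiLp.sub_apply, smul_eq_mul]
        linarith [hx1]
    by_cases hva : (C 0 - B 0) = 0
    · have hvb : (C 1 - B 1) ≠ 0 := by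
        intro h; rw [hva, h] at h2c; norm_num at h2c
      refine hline ((X 1 - B 1)/(C 1 - B 1)) ?_ ?_
      · have h0 : (C 1 - B 1) * (X 0 - B 0) = 0 := by rw [← hX, hva]; ring
        have h0' := (mul_eq_zero.mp h0).resolve_left hvb
        rw [hva]; rw [mul_zero]; linarith
      · field_simp
    · refine hline ((X 0 - B 0)/(C 0 - B 0)) ?_ ?_
      · field_simp
      · rw [div_mul_eq_mul_div, eq_div_iff hva]
        linear_combination hX
  -- the linear functional vanishes on the span
  have hfzero : ∀ X : Pt, X ∈ affineSpan ℝ ({B, C} : Set Pt) →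
      (C 0 - B 0) * (X 1 - B 1) - (C 1 - B 1) * (X 0 - B 0) = 0 := by
    intro X hXmem
    rw [← vsub_vadd X B] at hXmem
    obtain ⟨r, hr⟩ := vadd_left_mem_affineSpan_pair.mp hXmem
    have h0 : r * (C 0 - B 0) = X 0 - B 0 := by
      have := congrArg (fun v => v 0) hr
      simpa [vsub_eq_sub, PiLp.smul_apply, PiLp.sub_apply, smul_eq_mul] using this
    have h1' : r * (C 1 - B 1) = X 1 - B 1 := by
      have := congrArg (fun v => v 1) hr
      simpa [vsub_eq_sub, PiLp.smul_apply, PiLp.sub_apply, smul_eq_mul] using this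
    linear_combination (C 1 - B 1) * h0 - (C 0 - B 0) * h1'
  have hfA : (C 0 - B 0) * (A 1 - B 1) - (C 1 - B 1) * (A 0 - B 0) ≠ 0 := by
    intro h
    exact hA (hmem A (by linear_combination h))
  have hfD : (C 0 - B 0) * (D 1 - B 1) - (C 1 - B 1) * (D 0 - B 0) ≠ 0 := by
    intro h
    exact hD (hmem D (by linear_combination h))
  have hApne : A -ᵥ p₁ ≠ 0 := by
    intro h
    exact hA (vsub_eq_zero_iff_eq.mp h ▸ hp₁)
  have hDpne : D -ᵥ p₂ ≠ 0 := by
    intro h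
    exact hD (vsub_eq_zero_iff_eq.mp h ▸ hp₂)
  obtain ⟨r₁, r₂, hr₁, hr₂, hrr⟩ := hray.exists_pos hApne hDpne
  have hrr0 : r₁ * (A 0 - p₁ 0) = r₂ * (D 0 - p₂ 0) := by
    have := congrArg (fun v => v 0) hrr
    simpa [vsub_eq_sub, PiLp.smul_apply, PiLp.sub_apply, smul_eq_mul] using this
  have hrr1 : r₁ * (A 1 - p₁ 1) = r₂ * (D 1 - p₂ 1) := by
    have := congrArg (fun v => v 1) hrr
    simpa [vsub_eq_sub, PiLp.smul_apply, PiLp.sub_apply, smul_eq_mul] using this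
  have hfp₁ := hfzero p₁ hp₁
  have hfp₂ := hfzero p₂ hp₂
  have hsame : r₁ * ((C 0 - B 0) * (A 1 - B 1) - (C 1 - B 1) * (A 0 - B 0)) =
      r₂ * ((C 0 - B 0) * (D 1 - B 1) - (C 1 - B 1) * (D 0 - B 0)) := by
    linear_combination (C 0 - B 0) * hrr1 - (C 1 - B 1) * hrr0 + r₁ * hfp₁ - r₂ * hfp₂
  have hPQpos : 0 < ((C 0 - B 0) * (A 1 - B 1) - (C 1 - B 1) * (A 0 - B 0)) *
      ((C 0 - B 0) * (D 1 - C 1) - (C 1 - B 1) * (D 0 - C 0)) := by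
    have hfDval : (C 0 - B 0) * (D 1 - B 1) - (C 1 - B 1) * (D 0 - B 0) =
        (C 0 - B 0) * (D 1 - C 1) - (C 1 - B 1) * (D 0 - C 0) := by ring
    rw [← hfDval]
    rcases hfA.lt_or_gt with hPneg | hPpos
    · have hD0 : (C 0 - B 0) * (D 1 - B 1) - (C 1 - B 1) * (D 0 - B 0) < 0 := by
        nlinarith [hsame, hr₁, hr₂, hPneg, hfD.lt_or_gt]
      nlinarith [hPneg, hD0]
    · have hD0 : 0 < (C 0 - B 0) * (D 1 - B 1) - (C 1 - B 1) * (D 0 - B 0) := by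
        nlinarith [hsame, hr₁, hr₂, hPpos]
      nlinarith [hPpos, hD0]
  obtain ⟨hcore1, hcore2⟩ := core (A 0 - B 0) (A 1 - B 1) (C 0 - B 0) (C 1 - B 1)
    (D 0 - C 0) (D 1 - C 1) h1 h2c h3c hPQpos
  have hmain := hcore1 h4'
  -- bounds for arccos
  have hSP : ((A 0 - B 0)*(C 0 - B 0) + (A 1 - B 1)*(C 1 - B 1))^2 +
      ((C 0 - B 0)*(A 1 - B 1) - (C 1 - B 1)*(A 0 - B 0))^2 = 1 := by
    linear_combination ((C 0 - B 0)^2 + (C 1 - B 1)^2) * h1 + h2c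
  have hTQ : ((C 0 - B 0)*(D 0 - C 0) + (C 1 - B 1)*(D 1 - C 1))^2 +
      ((C 0 - B 0)*(D 1 - C 1) - (C 1 - B 1)*(D 0 - C 0))^2 = 1 := by
    linear_combination ((C 0 - B 0)^2 + (C 1 - B 1)^2) * h3c + h2c
  set S := (A 0 - B 0)*(C 0 - B 0) + (A 1 - B 1)*(C 1 - B 1) with hS_def
  set T := (C 0 - B 0)*(D 0 - C 0) + (C 1 - B 1)*(D 1 - C 1) with hT_def
  have hS1 : S^2 ≤ 1 := by
    linarith [hSP, sq_nonneg ((C 0 - B 0)*(A 1 - B 1) - (C 1 - B 1)*(A 0 - B 0))]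
  have hT1 : T^2 ≤ 1 := by
    linarith [hTQ, sq_nonneg ((C 0 - B 0)*(D 1 - C 1) - (C 1 - B 1)*(D 0 - C 0))]
  have hSle := abs_le.mp ((sq_le_one_iff_abs_le_one S).mp hS1)
  have hTle := abs_le.mp ((sq_le_one_iff_abs_le_one T).mp hT1)
  have hang1 : EuclideanGeometry.angle A B C = Real.arccos S := by
    rw [angle_coord A B C hAB (by rwa [dist_comm] at hBC)]
  have hang2 : EuclideanGeometry.angle B C D = π - Real.arccos T := by
    rw [angle_coord B C D hBC (by rwa [dist_comm] at hCD)]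
    have e : (B 0 - C 0)*(D 0 - C 0) + (B 1 - C 1)*(D 1 - C 1) = -T := by
      rw [hT_def]; ring
    rw [e, Real.arccos_neg]
  constructor
  · rw [hang1, hang2]
    have := Real.strictAntiOn_arccos.antitoneOn
      (Set.mem_Icc.mpr hSle) (Set.mem_Icc.mpr hTle) hmain
    linarith
  · intro heq
    rw [hang1, hang2] at heq
    have harc : Real.arccos S = Real.arccos T := by linarith
    have hST : S = T :=
      Real.arccos_injOn (Set.mem_Icc.mpr hSle) (Set.mem_Icc.mpr hTle) harc
    have hE := hcore2 hST
    rw [dist_coord A D]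
    have e : (A 0 - D 0)^2 + (A 1 - D 1)^2 = 1 := by linear_combination hE
    rw [e, Real.sqrt_one]
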